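/- Fix E < 0 and let q(ξ) = 4 Σ_{j=1}^d sinh²(ξ_j/2) and ∂K^E = {ξ ∈ ℝ^d : q(ξ) = |E|}. Then the Gauss map G_E : ∂K^E → 𝕊^{d−1} defined by G_E(ξ) = ∂q(ξ)/|∂q(ξ)| (where ∂q is the gradient of q, which is nonzero on ∂K^E) is a bijection from ∂K^E onto the unit sphere 𝕊^{d−1}. -/

import Mathlib

open MeasureTheory Real

noncomputable section

/-- `q(ξ) = 4 Σ_j sinh²(ξ_j/2)`. -/
def qfun {d : ℕ} (ξ : EuclideanSpace ℝ (Fin d)) : ℝ :=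
  4 * ∑ j, Real.sinh (ξ j / 2) ^ 2

lemma gradient_qfun {d : ℕ} (ξ : EuclideanSpace ℝ (Fin d)) :
    gradient qfun ξ = (WithLp.toLp 2 (fun j => 2 * Real.sinh (ξ j)) : EuclideanSpace ℝ (Fin d)) := by
  have hF : HasFDerivAt qfun
      ((4:ℝ) • ∑ j, (Real.sinh (ξ j / 2) * Real.cosh (ξ j / 2)) •
        (EuclideanSpace.proj j : EuclideanSpace ℝ (Fin d) →L[ℝ] ℝ)) ξ := by
    have hsum : HasFDerivAt (fun x : EuclideanSpace ℝ (Fin d) => ∑ j, Real.sinh (x j / 2) ^ 2)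
        (∑ j, (Real.sinh (ξ j / 2) * Real.cosh (ξ j / 2)) •
          (EuclideanSpace.proj j : EuclideanSpace ℝ (Fin d) →L[ℝ] ℝ)) ξ := by
      apply HasFDerivAt.fun_sum
      intro j _
      have hd : HasDerivAt (fun t : ℝ => Real.sinh (t / 2) ^ 2)
          (Real.sinh (ξ j / 2) * Real.cosh (ξ j / 2)) (ξ j) := by
        have h1 : HasDerivAt (fun t : ℝ => t / 2) (1/2) (ξ j) := by
          simpa using (hasDerivAt_id (ξ j)).div_const 2
        have h2 : HasDerivAt (fun t : ℝ => Real.sinh (t / 2)) (Real.cosh (ξ j / 2) * (1/2)) (ξ j) :=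
          (Real.hasDerivAt_sinh (ξ j / 2)).comp (h₂ := Real.sinh) (ξ j) h1
        have := h2.fun_pow 2
        refine this.congr_deriv ?_
        ring
      have hp : HasFDerivAt (fun y : EuclideanSpace ℝ (Fin d) => y j)
          (EuclideanSpace.proj j : EuclideanSpace ℝ (Fin d) →L[ℝ] ℝ) ξ :=
        (EuclideanSpace.proj (𝕜 := ℝ) j).hasFDerivAt
      exact hd.comp_hasFDerivAt ξ hp
    exact hsum.const_mul 4
  have hG : HasGradientAt qfun (WithLp.toLp 2 (fun j => 2 * Real.sinh (ξ j)) : EuclideanSpace ℝ (Fin d)) ξ := by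
    rw [hasGradientAt_iff_hasFDerivAt]
    refine hF.congr_fderiv ?_
    apply ContinuousLinearMap.ext
    intro v
    simp only [InnerProductSpace.toDual_apply_apply, PiLp.inner_apply, RCLike.inner_apply,
      ContinuousLinearMap.smul_apply, ContinuousLinearMap.sum_apply, PiLp.proj_apply,
      smul_eq_mul, Finset.smul_sum, star_trivial]
    apply Finset.sum_congr rfl
    intro j _
    have : Real.sinh (ξ j) = 2 * Real.sinh (ξ j / 2) * Real.cosh (ξ j / 2) := by
      rw [← Real.sinh_two_mul]; ring_nf
    simp [this]; ring
  exact hG.gradient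

lemma cosh_eq_sqrt (t : ℝ) : Real.cosh t = Real.sqrt (1 + Real.sinh t ^ 2) := by
  rw [← Real.sqrt_sq (Real.cosh_pos (x := t)).le, Real.cosh_sq]
  ring_nf

lemma qfun_eq {d : ℕ} (ξ : EuclideanSpace ℝ (Fin d)) :
    qfun ξ = ∑ j, (2 * Real.sqrt (1 + Real.sinh (ξ j) ^ 2) - 2) := by
  rw [qfun, Finset.mul_sum]
  apply Finset.sum_congr rfl
  intro j _
  rw [← cosh_eq_sqrt]
  have h : Real.cosh (ξ j) = Real.cosh (2 * (ξ j / 2)) := by ring_nf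
  rw [h, Real.cosh_two_mul]
  nlinarith [Real.cosh_sq (ξ j / 2)]

lemma term_nonneg (y : ℝ) : 0 ≤ 2 * Real.sqrt (1 + y ^ 2) - 2 := by
  nlinarith [Real.sqrt_le_sqrt (show (1:ℝ) ≤ 1 + y^2 by nlinarith), Real.sqrt_one]

lemma Q_strict {d : ℕ} (y : Fin d → ℝ) (j₀ : Fin d) (hy : y j₀ ≠ 0) {a b : ℝ}
    (ha : 0 ≤ a) (hab : a < b) :
    ∑ j, (2 * Real.sqrt (1 + (a * y j) ^ 2) - 2) <
    ∑ j, (2 * Real.sqrt (1 + (b * y j) ^ 2) - 2) := by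
  apply Finset.sum_lt_sum
  · intro j _
    have hb : a^2 ≤ b^2 := by nlinarith
    have h2 : (a * y j)^2 ≤ (b * y j)^2 := by
      rw [mul_pow, mul_pow]
      exact mul_le_mul_of_nonneg_right hb (sq_nonneg _)
    have h3 := Real.sqrt_le_sqrt (show 1 + (a*y j)^2 ≤ 1 + (b*y j)^2 by linarith)
    linarith
  · refine ⟨j₀, Finset.mem_univ _, ?_⟩
    have hy2 : 0 < y j₀ ^ 2 := by positivity
    have hb : a^2 < b^2 := by nlinarith
    have h1 : (a * y j₀)^2 < (b * y j₀)^2 := by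
      rw [mul_pow, mul_pow]
      exact mul_lt_mul_of_pos_right hb hy2
    have h3 := Real.sqrt_lt_sqrt (show (0:ℝ) ≤ 1 + (a*y j₀)^2 by positivity)
      (show 1 + (a*y j₀)^2 < 1 + (b*y j₀)^2 by linarith)
    linarith

lemma grad_ne_zero {d : ℕ} (ξ : EuclideanSpace ℝ (Fin d)) (h : qfun ξ ≠ 0) :
    gradient qfun ξ ≠ 0 := by
  intro h0
  apply h
  rw [gradient_qfun] at h0
  have hall : ∀ j, ξ j = 0 := by
    intro j
    have h1 := congrArg (fun v : EuclideanSpace ℝ (Fin d) => v j) h0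
    simp only [PiLp.zero_apply] at h1
    have h2 : Real.sinh (ξ j) = 0 := by linarith [h1]
    have := Real.sinh_injective (by simpa [Real.sinh_zero] using h2)
    exact this
  simp [qfun, hall]

lemma key_inj {d : ℕ} (ξ η : EuclideanSpace ℝ (Fin d)) (c : ℝ) (hc : 0 < c)
    (hs : ∀ j, Real.sinh (ξ j) = c * Real.sinh (η j)) (hq : qfun ξ = qfun η)
    (hpos : 0 < qfun η) : ξ = η := by
  obtain ⟨j₀, hj₀⟩ : ∃ j, Real.sinh (η j) ≠ 0 := by
    by_contra hcon
    push_neg at hcon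
    have : qfun η = 0 := by
      rw [qfun_eq]
      apply Finset.sum_eq_zero
      intro j _
      simp [hcon j]
    linarith
  have hqξ : qfun ξ = ∑ j, (2 * Real.sqrt (1 + (c * Real.sinh (η j)) ^ 2) - 2) := by
    rw [qfun_eq]
    exact Finset.sum_congr rfl fun j _ => by rw [hs j]
  have hqη : qfun η = ∑ j, (2 * Real.sqrt (1 + ((1:ℝ) * Real.sinh (η j)) ^ 2) - 2) := by
    rw [qfun_eq]; simp
  have hc1 : c = 1 := by
    rcases lt_trichotomy c 1 with h | h | h
    · exfalso
      have := Q_strict (fun j => Real.sinh (η j)) j₀ hj₀ hc.le h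
      rw [← hqξ, ← hqη] at this
      linarith
    · exact h
    · exfalso
      have := Q_strict (fun j => Real.sinh (η j)) j₀ hj₀ (by linarith) h
      rw [← hqη, ← hqξ] at this
      linarith
  ext j
  apply Real.sinh_injective
  rw [hs j, hc1, one_mul]

/-- for `E < 0`, the gradient `∂q` is nonvanishing on
`∂K^E = {ξ : q(ξ) = |E|}` and the Gauss map `G_E(ξ) = ∂q(ξ)/|∂q(ξ)|` is a bijection
from `∂K^E` onto the unit sphere `𝕊^{d-1}`. -/
theorem gauss_map_bijective (d : ℕ) (hd : 0 < d) (E : ℝ) (hE : E < 0) :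
    (∀ ξ : EuclideanSpace ℝ (Fin d), qfun ξ = |E| → gradient qfun ξ ≠ 0) ∧
    Set.BijOn (fun ξ : EuclideanSpace ℝ (Fin d) =>
        ‖gradient qfun ξ‖⁻¹ • gradient qfun ξ)
      {ξ : EuclideanSpace ℝ (Fin d) | qfun ξ = |E|}
      (Metric.sphere (0 : EuclideanSpace ℝ (Fin d)) 1) := by
  have habs : (0:ℝ) < |E| := abs_pos.mpr (ne_of_lt hE)
  have hnz : ∀ ξ : EuclideanSpace ℝ (Fin d), qfun ξ = |E| → gradient qfun ξ ≠ 0 := by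
    intro ξ h
    exact grad_ne_zero ξ (by rw [h]; exact ne_of_gt habs)
  refine ⟨hnz, ?_, ?_, ?_⟩
  · -- MapsTo
    intro ξ hξ
    have hg := hnz ξ hξ
    have hn : ‖gradient qfun ξ‖ ≠ 0 := norm_ne_zero_iff.mpr hg
    simp only [mem_sphere_zero_iff_norm, norm_smul, norm_inv, norm_norm]
    field_simp
  · -- InjOn
    intro ξ hξ η hη heq
    simp only [Set.mem_setOf_eq] at hξ hη
    have hgξ := hnz ξ hξ
    have hgη := hnz η hη
    have haξ : 0 < ‖gradient qfun ξ‖ := norm_pos_iff.mpr hgξ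
    have haη : 0 < ‖gradient qfun η‖ := norm_pos_iff.mpr hgη
    have hgj : ∀ (ζ : EuclideanSpace ℝ (Fin d)) (j : Fin d),
        gradient qfun ζ j = 2 * Real.sinh (ζ j) := fun ζ j =>
      congrArg (fun v : EuclideanSpace ℝ (Fin d) => v j) (gradient_qfun ζ)
    set a := ‖gradient qfun ξ‖ with ha
    set b := ‖gradient qfun η‖ with hb
    have hcomp : ∀ j, a⁻¹ * (2 * Real.sinh (ξ j)) = b⁻¹ * (2 * Real.sinh (η j)) := by
      intro j
      have h1 := congrArg (fun v : EuclideanSpace ℝ (Fin d) => v j) heq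
      simp only [PiLp.smul_apply, smul_eq_mul, hgj] at h1
      exact h1
    have hs : ∀ j, Real.sinh (ξ j) = (a / b) * Real.sinh (η j) := by
      intro j
      have := hcomp j
      field_simp at this ⊢
      linarith
    exact key_inj ξ η (a / b) (div_pos haξ haη) hs (by rw [hξ, hη]) (by rw [hη]; exact habs)
  · -- SurjOn
    intro n hn
    have hn1 : ‖n‖ = 1 := by simpa [mem_sphere_zero_iff_norm] using hn
    have hsum : ∑ j, n j ^ 2 = 1 := by
      have h := hn1
      rw [EuclideanSpace.norm_eq] at h
      rw [Real.sqrt_eq_one] at h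
      simpa [Real.norm_eq_abs, sq_abs] using h
    obtain ⟨j₀, hj₀⟩ : ∃ j, n j ≠ 0 := by
      by_contra hcon
      push_neg at hcon
      simp [hcon] at hsum
    have hnj : (0:ℝ) < |n j₀| := abs_pos.mpr hj₀
    set f : ℝ → ℝ := fun c => ∑ j, (2 * Real.sqrt (1 + (c * n j) ^ 2) - 2) with hf
    have hcont : Continuous f := by
      apply continuous_finset_sum
      intro j _
      exact (continuous_const.mul (Real.continuous_sqrt.comp (by continuity))).sub continuous_const
    have hf0 : f 0 = 0 := by simp [hf]
    set M : ℝ := (|E| + 2) / (2 * |n j₀|) with hM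
    have hMpos : 0 < M := by positivity
    have hfM : |E| ≤ f M := by
      have h1 : 2 * Real.sqrt (1 + (M * n j₀) ^ 2) - 2 ≤ f M := by
        apply Finset.single_le_sum (f := fun j => 2 * Real.sqrt (1 + (M * n j) ^ 2) - 2)
          (fun j _ => term_nonneg _) (Finset.mem_univ j₀)
      have h2 : M * |n j₀| ≤ Real.sqrt (1 + (M * n j₀) ^ 2) := by
        have : M * |n j₀| = Real.sqrt ((M * n j₀) ^ 2) := by
          rw [Real.sqrt_sq_eq_abs, abs_mul, abs_of_pos hMpos]
        rw [this]
        exact Real.sqrt_le_sqrt (by linarith)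
      have h3 : M * |n j₀| = (|E| + 2) / 2 := by
        rw [hM]; field_simp
      linarith
    obtain ⟨c, hcmem, hfc⟩ : ∃ c ∈ Set.Icc (0:ℝ) M, f c = |E| := by
      have := intermediate_value_Icc hMpos.le hcont.continuousOn
      have hmem : |E| ∈ Set.Icc (f 0) (f M) := ⟨by rw [hf0]; exact habs.le, hfM⟩
      obtain ⟨c, hc, hfc⟩ := this hmem
      exact ⟨c, hc, hfc⟩
    have hc0 : 0 < c := by
      rcases eq_or_lt_of_le hcmem.1 with h | h
      · exfalso; rw [← h, hf0] at hfc; linarith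
      · exact h
    refine ⟨(WithLp.toLp 2 (fun j => Real.arsinh (c * n j)) : EuclideanSpace ℝ (Fin d)), ?_, ?_⟩
    · show qfun _ = |E|
      rw [qfun_eq]
      rw [← hfc, hf]
      exact Finset.sum_congr rfl fun j _ => by rw [Real.sinh_arsinh]
    · show ‖gradient qfun _‖⁻¹ • gradient qfun _ = n
      have hgr : gradient qfun (WithLp.toLp 2 (fun j => Real.arsinh (c * n j)) : EuclideanSpace ℝ (Fin d))
          = (2 * c) • n := by
        rw [gradient_qfun]
        ext j
        simp [Real.sinh_arsinh, PiLp.smul_apply, smul_eq_mul]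
        ring
      rw [hgr, norm_smul]
      have : ‖(2 * c : ℝ)‖ = 2 * c := by
        rw [Real.norm_eq_abs, abs_of_pos (by linarith)]
      rw [this, hn1, mul_one, smul_smul, inv_mul_cancel₀ (by linarith : (2*c:ℝ) ≠ 0), one_smul]
end
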